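/- arXiv:2112.01614 — 4 statements merged into one kernel-verified Lean document; each statement's English description precedes it below -/
import Mathlib

section
/- Let m ≥ 1, let A_m ∈ ℝ^{m×m} be the upper shift matrix, c_m ∈ ℝ^m the first standard basis vector, and for ω ∈ ℝ let l(ω) ∈ ℝ^m have entries l_i(ω) = binom(m,i)·ω^i for i = 1,…,m. Then the characteristic polynomial of the extended state observer error matrix M(ω) = A_m − l(ω)·c_m^⊤ equals (X + ω)^m. -/
open Matrix Polynomial

/-- The `m × m` upper shift matrix: ones on the superdiagonal, zeros elsewhere. -/
noncomputable def shiftMat (m : ℕ) : Matrix (Fin m) (Fin m) ℝ :=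
  Matrix.of fun i j => if (i : ℕ) + 1 = (j : ℕ) then 1 else 0

/-- The first standard basis vector of `ℝ^m`. -/
noncomputable def firstBasis (m : ℕ) : Fin m → ℝ :=
  fun i => if (i : ℕ) = 0 then 1 else 0

/-- Bandwidth-parametrized observer gain: `l_i(ω) = binom(m,i)·ω^i` for `i = 1,…,m`
(0-indexed: `l i = binom(m, i+1)·ω^(i+1)`). -/
noncomputable def obsGain (m : ℕ) (ω : ℝ) : Fin m → ℝ :=
  fun i => (m.choose ((i : ℕ) + 1)) * ω ^ ((i : ℕ) + 1)

/-- The ESO error matrix `M(ω) = A_m − l(ω)·c_m^⊤`. -/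
noncomputable def esoMat (m : ℕ) (ω : ℝ) : Matrix (Fin m) (Fin m) ℝ :=
  shiftMat m - Matrix.vecMulVec (obsGain m ω) (firstBasis m)

/-- Auxiliary companion-like matrix over `ℝ[X]`. -/
noncomputable def auxM (n : ℕ) (a : Fin n → Polynomial ℝ) : Matrix (Fin n) (Fin n) (Polynomial ℝ) :=
  Matrix.of fun i j =>
    (if (j : ℕ) = 0 then a i else 0) + (if i = j then X else 0)
      - (if (i : ℕ) + 1 = (j : ℕ) then 1 else 0)

lemma auxM_det (n : ℕ) (a : Fin n → Polynomial ℝ) :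
    (auxM n a).det = X ^ n + ∑ i : Fin n, a i * X ^ (n - 1 - (i : ℕ)) := by
  induction n with
  | zero => simp [auxM]
  | succ n ih =>
    rw [Matrix.det_succ_row (auxM (n + 1) a) (Fin.last n)]
    have hrow : ∀ j : Fin (n + 1), auxM (n + 1) a (Fin.last n) j
        = (if (j : ℕ) = 0 then a (Fin.last n) else 0) + (if Fin.last n = j then X else 0) := by
      intro j
      have hne : ¬ (n + 1 = (j : ℕ)) := by have := j.isLt; omega
      simp [auxM, Fin.val_last, hne]
    -- split each summand into the two contributions of the last row entry
    have hsplit : ∀ j : Fin (n + 1),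
        (-1 : Polynomial ℝ) ^ ((Fin.last n : ℕ) + (j : ℕ)) * auxM (n + 1) a (Fin.last n) j *
          ((auxM (n + 1) a).submatrix (Fin.last n).succAbove j.succAbove).det
        = (-1 : Polynomial ℝ) ^ ((Fin.last n : ℕ) + (j : ℕ)) *
            (if (j : ℕ) = 0 then a (Fin.last n) else 0) *
            ((auxM (n + 1) a).submatrix (Fin.last n).succAbove j.succAbove).det
          + (-1 : Polynomial ℝ) ^ ((Fin.last n : ℕ) + (j : ℕ)) *
            (if Fin.last n = j then X else 0) *
            ((auxM (n + 1) a).submatrix (Fin.last n).succAbove j.succAbove).det := by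
      intro j
      rw [hrow j]; ring
    rw [Finset.sum_congr rfl (fun j _ => hsplit j), Finset.sum_add_distrib]
    -- first sum: only j = 0 contributes
    have h1 : (∑ j : Fin (n + 1),
        (-1 : Polynomial ℝ) ^ ((Fin.last n : ℕ) + (j : ℕ)) *
          (if (j : ℕ) = 0 then a (Fin.last n) else 0) *
          ((auxM (n + 1) a).submatrix (Fin.last n).succAbove j.succAbove).det)
        = a (Fin.last n) := by
      rw [Finset.sum_eq_single (0 : Fin (n + 1))]
      · -- the j = 0 minor is lower triangular with diagonal -1
        have hminor : ((auxM (n + 1) a).submatrix (Fin.last n).succAbove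
            (0 : Fin (n + 1)).succAbove).det = (-1 : Polynomial ℝ) ^ n := by
          have htri : ((auxM (n + 1) a).submatrix (Fin.last n).succAbove
              (0 : Fin (n + 1)).succAbove).BlockTriangular OrderDual.toDual := by
            intro i j hij
            have hij' : (i : ℕ) < (j : ℕ) := hij
            have h1 : ¬ ((((0 : Fin (n+1)).succAbove j : Fin (n+1)) : ℕ) = 0) := by
              simp [Fin.succAbove_zero, Fin.val_succ]
            have h2 : ¬ (Fin.castSucc i = Fin.succ j) := by
              rw [Fin.ext_iff]
              simp only [Fin.coe_castSucc, Fin.val_succ]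
              omega
            have h3 : ¬ ((i : ℕ) = (j : ℕ)) := by omega
            simp [auxM, Matrix.submatrix_apply, h1, h2, h3]
          rw [Matrix.det_of_lowerTriangular _ htri]
          have hdiag : ∀ i : Fin n,
              auxM (n + 1) a (Fin.castSucc i) (Fin.succ i) = -1 := by
            intro i
            have h1 : ¬ ((((0 : Fin (n+1)).succAbove i : Fin (n+1)) : ℕ) = 0) := by
              simp [Fin.succAbove_zero, Fin.val_succ]
            have h2 : ¬ (Fin.castSucc i = Fin.succ i) := by
              rw [Fin.ext_iff]
              simp only [Fin.coe_castSucc, Fin.val_succ]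
              omega
            simp [auxM, h2]
          calc (∏ i : Fin n, ((auxM (n + 1) a).submatrix (Fin.last n).succAbove
                  (0 : Fin (n + 1)).succAbove) i i)
              = ∏ _i : Fin n, (-1 : Polynomial ℝ) := by
                refine Finset.prod_congr rfl fun i _ => ?_
                simpa [Matrix.submatrix_apply] using hdiag i
            _ = (-1 : Polynomial ℝ) ^ n := by simp
        rw [hminor]
        have hone : (-1 : Polynomial ℝ) ^ n * (-1 : Polynomial ℝ) ^ n = 1 := by
          rw [← pow_add, ← two_mul, pow_mul]
          norm_num
        simp only [Fin.val_zero, Fin.val_last, Nat.add_zero, eq_self_iff_true, if_true]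
        rw [mul_assoc, mul_comm (a (Fin.last n)), ← mul_assoc, hone, one_mul]
      · intro j _ hj
        have : ¬ ((j : ℕ) = 0) := by
          intro h; exact hj (Fin.ext h)
        simp [this]
      · simp
    -- second sum: only j = last contributes
    have h2 : (∑ j : Fin (n + 1),
        (-1 : Polynomial ℝ) ^ ((Fin.last n : ℕ) + (j : ℕ)) *
          (if Fin.last n = j then X else 0) *
          ((auxM (n + 1) a).submatrix (Fin.last n).succAbove j.succAbove).det)
        = X ^ (n + 1) + ∑ i : Fin n, a (Fin.castSucc i) * X ^ (n - (i : ℕ)) := by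
      rw [Finset.sum_eq_single (Fin.last n)]
      · have hminor : ((auxM (n + 1) a).submatrix (Fin.last n).succAbove
            (Fin.last n).succAbove) = auxM n (fun i => a (Fin.castSucc i)) := by
          ext i j
          simp only [Matrix.submatrix_apply, Fin.succAbove_last, auxM, Matrix.of_apply,
            Fin.coe_castSucc, Fin.castSucc_inj]
        rw [hminor, ih]
        have hX : ∀ i : Fin n, X * (a (Fin.castSucc i) * X ^ (n - 1 - (i : ℕ)))
            = a (Fin.castSucc i) * X ^ (n - (i : ℕ)) := by
          intro i
          have hi : (i : ℕ) < n := i.isLt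
          have : n - 1 - (i : ℕ) + 1 = n - (i : ℕ) := by omega
          rw [mul_comm X, mul_assoc, ← pow_succ, this]
        have hone : (-1 : Polynomial ℝ) ^ ((Fin.last n : ℕ) + (Fin.last n : ℕ)) = 1 := by
          rw [← two_mul, pow_mul]
          norm_num
        rw [hone, one_mul, if_pos rfl, mul_add, Finset.mul_sum, ← pow_succ']
        rw [Finset.sum_congr rfl (fun i _ => hX i)]
      · intro j _ hj
        simp [Ne.symm hj]
      · simp
    rw [h1, h2]
    rw [Fin.sum_univ_castSucc]
    have : (n + 1) - 1 - (n : ℕ) = 0 := by omega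
    simp only [Fin.val_last, this, pow_zero, mul_one, Fin.coe_castSucc]
    have hcongr : ∀ i : Fin n, a (Fin.castSucc i) * X ^ (n + 1 - 1 - (i : ℕ))
        = a (Fin.castSucc i) * X ^ (n - (i : ℕ)) := by
      intro i
      have he : n + 1 - 1 - (i : ℕ) = n - (i : ℕ) := by omega
      rw [he]
    rw [Finset.sum_congr rfl (fun i _ => hcongr i)]
    ring

lemma binom_expand (m : ℕ) (ω : ℝ) :
    ((X : Polynomial ℝ) + C ω) ^ m
      = X ^ m + ∑ i : Fin m, C ((m.choose ((i : ℕ) + 1)) * ω ^ ((i : ℕ) + 1)) * X ^ (m - 1 - (i : ℕ)) := by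
  rw [add_pow, Finset.sum_range_succ]
  simp only [Nat.choose_self, Nat.cast_one, mul_one, Nat.sub_self, pow_zero]
  rw [add_comm]
  congr 1
  rw [← Finset.sum_range_reflect,
    Fin.sum_univ_eq_sum_range
      (fun k => C (((m.choose (k + 1) : ℝ)) * ω ^ (k + 1)) * X ^ (m - 1 - k)) m]
  refine Finset.sum_congr rfl fun j hj => ?_
  have hj' : j < m := Finset.mem_range.mp hj
  have h1 : m - (m - 1 - j) = j + 1 := by omega
  have h2 : m.choose (m - 1 - j) = m.choose (j + 1) := by
    have : m - (m - 1 - j) = j + 1 := by omega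
    rw [← Nat.choose_symm (by omega : m - 1 - j ≤ m), this]
  rw [h1, h2, Polynomial.C_mul, Polynomial.C_pow]
  simp only [Polynomial.C_eq_natCast]
  ring

/-- The characteristic polynomial of the bandwidth-parametrized ESO error matrix
`M(ω) = A_m − l(ω)·c_m^⊤` equals `(X + ω)^m`. -/
theorem eso_charpoly (m : ℕ) (hm : 1 ≤ m) (ω : ℝ) :
    (esoMat m ω).charpoly = (X + C ω) ^ m := by
  have hmat : charmatrix (esoMat m ω)
      = auxM m (fun i => C ((m.choose ((i : ℕ) + 1)) * ω ^ ((i : ℕ) + 1))) := by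
    ext i j
    simp only [charmatrix_apply, esoMat, shiftMat, firstBasis, obsGain, Matrix.vecMulVec_apply,
      auxM, Matrix.of_apply, Matrix.sub_apply, Matrix.smul_apply, Matrix.one_apply,
      Matrix.map_apply, Pi.sub_apply, smul_ite, smul_eq_mul, mul_one, mul_zero]
    by_cases hij : i = j <;> by_cases h1 : (i : ℕ) + 1 = (j : ℕ) <;>
      by_cases h0 : (j : ℕ) = 0 <;>
      simp [hij, h1, h0, apply_ite C, mul_ite, sub_eq_iff_eq_add] <;> ring
  rw [Matrix.charpoly, hmat, auxM_det, binom_expand]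
end

section
/- Let m ≥ 1, A_m ∈ ℝ^{m×m} the upper shift matrix, c_m the first standard basis vector, l_i(ω) = binom(m,i)·ω^i, and M(ω) = A_m − l(ω)·c_m^⊤. Then for every ω ∈ ℝ the spectrum of M(ω) (over ℂ, i.e. the set of eigenvalues of the complexified matrix) is exactly the singleton {−ω}; in particular every eigenvalue of the bandwidth-parametrized observer error matrix equals −ω, so for ω > 0 the matrix is Hurwitz. -/
open Matrix Finset

noncomputable def Dmat (x : ℂ) (n : ℕ) (v : Fin n → ℂ) : Matrix (Fin n) (Fin n) ℂ :=
  Matrix.of fun i j =>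
    if (j : ℕ) = 0 then v i
    else if (i : ℕ) = (j : ℕ) then x
    else if (i : ℕ) + 1 = (j : ℕ) then -1 else 0

lemma detD (x : ℂ) : ∀ n (v : Fin (n+1) → ℂ),
    (Dmat x (n+1) v).det = ∑ i : Fin (n+1), v i * x ^ (n - (i : ℕ)) := by
  intro n
  induction n with
  | zero =>
    intro v
    simp [Matrix.det_fin_one, Dmat]
  | succ k ih =>
    intro v
    rw [Matrix.det_succ_row_zero, Fin.sum_univ_succ, Fin.sum_univ_succ]
    have h2 : ∀ j : Fin k, (Dmat x (k+1+1) v) 0 j.succ.succ = 0 := by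
      intro j
      simp only [Dmat, Matrix.of_apply, Fin.val_succ, Fin.val_zero]
      norm_num
    have hrest : (∑ j : Fin k, (-1 : ℂ) ^ ((j.succ.succ : Fin (k+2)) : ℕ) *
        (Dmat x (k+1+1) v) 0 j.succ.succ *
        ((Dmat x (k+1+1) v).submatrix Fin.succ (Fin.succAbove j.succ.succ)).det) = 0 := by
      apply Finset.sum_eq_zero
      intro j _
      rw [h2 j]; ring
    rw [hrest, add_zero]
    -- first minor: upper triangular
    have hm0 : ((Dmat x (k+1+1) v).submatrix Fin.succ (Fin.succAbove 0)).det = x ^ (k+1) := by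
      have htri : ((Dmat x (k+1+1) v).submatrix Fin.succ (Fin.succAbove 0)).BlockTriangular id := by
        intro i j hij
        simp only [Matrix.submatrix_apply, Fin.succAbove_zero, Dmat, Matrix.of_apply,
          Fin.val_succ]
        have : (j : ℕ) < (i : ℕ) := hij
        have h1 : (j : ℕ) + 1 ≠ 0 := by omega
        rw [if_neg h1, if_neg (by omega), if_neg (by omega)]
      rw [Matrix.det_of_upperTriangular htri]
      have : ∀ i : Fin (k+1), ((Dmat x (k+1+1) v).submatrix Fin.succ (Fin.succAbove 0)) i i = x := by
        intro i
        simp only [Matrix.submatrix_apply, Fin.succAbove_zero, Dmat, Matrix.of_apply,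
          Fin.val_succ]
        simp
      rw [Finset.prod_congr rfl (fun i _ => this i), Finset.prod_const, Finset.card_univ,
        Fintype.card_fin]
    -- second minor equals Dmat of tail
    have hm1 : (Dmat x (k+1+1) v).submatrix Fin.succ (Fin.succAbove (Fin.succ 0))
        = Dmat x (k+1) (v ∘ Fin.succ) := by
      ext i j
      rcases Fin.eq_zero_or_eq_succ j with hj | ⟨j', rfl⟩
      · subst hj
        simp only [Matrix.submatrix_apply, Dmat, Matrix.of_apply, Function.comp]
        have hsa : (Fin.succ (0 : Fin (k+1))).succAbove 0 = 0 := rfl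
        rw [hsa]
        simp
      · simp only [Matrix.submatrix_apply, Dmat, Matrix.of_apply, Function.comp]
        have hsa : (Fin.succ (0 : Fin (k+1))).succAbove j'.succ = j'.succ.succ := by
          rw [Fin.succAbove_of_le_castSucc]
          simp [Fin.le_def]
        rw [hsa]
        simp only [Fin.val_succ]
        split_ifs <;> first | rfl | omega
    rw [hm0, hm1, ih (v ∘ Fin.succ)]
    have hA00 : (Dmat x (k+1+1) v) 0 0 = v 0 := by simp [Dmat]
    have hA01 : (Dmat x (k+1+1) v) 0 (Fin.succ 0) = -1 := by
      simp [Dmat]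
    rw [hA00, hA01, Fin.sum_univ_succ (f := fun i : Fin (k+2) => v i * x ^ (k + 1 - (i:ℕ)))]
    simp only [Fin.val_zero, Fin.val_succ, Nat.sub_zero, Fin.val_zero, pow_zero,
      Function.comp]
    have : ∀ i : Fin (k+1), k + 1 - ((i:ℕ) + 1) = k - (i:ℕ) := by intro i; omega
    simp only [this]
    ring

/-- For every `ω ∈ ℝ` the spectrum over `ℂ` of the bandwidth-parametrized ESO error matrix
`M(ω) = A_m − l(ω)·c_m^⊤` is exactly the singleton `{−ω}`. -/
theorem eso_spectrum (m : ℕ) (hm : 1 ≤ m) (ω : ℝ) :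
    spectrum ℂ ((esoMat m ω).map (algebraMap ℝ ℂ)) = {(-(ω : ℂ))} := by
  obtain ⟨n, rfl⟩ : ∃ n, m = n + 1 := ⟨m - 1, by omega⟩
  set A := (esoMat (n+1) ω).map (algebraMap ℝ ℂ) with hA
  ext μ
  rw [Set.mem_singleton_iff, spectrum.mem_iff]
  rw [Matrix.isUnit_iff_isUnit_det, isUnit_iff_ne_zero, not_not]
  -- identify the matrix with Dmat
  set v : Fin (n+1) → ℂ := fun i =>
    (if (i : ℕ) = 0 then μ else 0) + ((n+1).choose ((i:ℕ)+1)) * (ω : ℂ) ^ ((i:ℕ)+1) with hv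
  have hmat : (algebraMap ℂ (Matrix (Fin (n+1)) (Fin (n+1)) ℂ)) μ - A = Dmat μ (n+1) v := by
    ext i j
    simp only [Matrix.sub_apply, Matrix.algebraMap_matrix_apply, hA, Matrix.map_apply,
      esoMat, Matrix.sub_apply, shiftMat, Matrix.of_apply, Matrix.vecMulVec_apply,
      obsGain, firstBasis, Dmat, hv, map_sub, _root_.map_mul, map_pow, map_natCast, _root_.map_one,
      map_zero, Complex.coe_algebraMap, Algebra.algebraMap_self, RingHom.id_apply]
    by_cases hj0 : (j : ℕ) = 0
    · rw [if_pos hj0]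
      have hij : (i = j) ↔ ((i:ℕ) = 0) := by
        rw [Fin.ext_iff, hj0]
      have h1 : ¬ ((i:ℕ) + 1 = (j:ℕ)) := by omega
      rw [if_neg h1, if_pos hj0]
      by_cases hi0 : (i:ℕ) = 0
      · rw [if_pos (hij.mpr hi0), if_pos hi0]
        push_cast
        ring
      · rw [if_neg (fun h => hi0 (hij.mp h)), if_neg hi0]
        push_cast
        ring
    · rw [if_neg hj0, if_neg hj0]
      have hij : (i = j) ↔ ((i:ℕ) = (j:ℕ)) := Fin.ext_iff
      by_cases hd : (i:ℕ) = (j:ℕ)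
      · rw [if_pos (hij.mpr hd), if_pos hd]
        have : ¬ ((i:ℕ)+1 = (j:ℕ)) := by omega
        rw [if_neg this]
        push_cast
        ring
      · rw [if_neg (fun h => hd (hij.mp h)), if_neg hd]
        by_cases hs : (i:ℕ)+1 = (j:ℕ)
        · rw [if_pos hs, if_pos hs]
          push_cast
          ring
        · rw [if_neg hs, if_neg hs]
          push_cast
          ring
  rw [hmat, detD]
  -- compute the sum
  have hsum : (∑ i : Fin (n+1), v i * μ ^ (n - (i:ℕ))) = ((ω:ℂ) + μ) ^ (n+1) := by
    have hsplit : ∀ i : Fin (n+1), v i * μ ^ (n - (i:ℕ)) =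
        (if (i:ℕ) = 0 then μ else 0) * μ ^ (n - (i:ℕ))
        + ((n+1).choose ((i:ℕ)+1) : ℂ) * (ω:ℂ)^((i:ℕ)+1) * μ ^ (n - (i:ℕ)) := by
      intro i; simp only [hv]; ring
    rw [Finset.sum_congr rfl (fun i _ => hsplit i), Finset.sum_add_distrib]
    have h1 : ∑ i : Fin (n+1), (if (i:ℕ) = 0 then μ else 0) * μ ^ (n - (i:ℕ)) = μ ^ (n+1) := by
      rw [Fin.sum_univ_succ]
      simp [pow_succ, mul_comm]
    have h2 : ∑ i : Fin (n+1), (((n+1).choose ((i:ℕ)+1) : ℂ) * (ω:ℂ)^((i:ℕ)+1) * μ ^ (n - (i:ℕ)))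
        = ∑ i ∈ Finset.range (n+1), (((n+1).choose (i+1) : ℂ) * (ω:ℂ)^(i+1) * μ ^ (n - i)) :=
      Fin.sum_univ_eq_sum_range (fun i => (((n+1).choose (i+1) : ℂ) * (ω:ℂ)^(i+1) * μ ^ (n - i))) (n+1)
    rw [h1, h2, add_pow]
    rw [Finset.sum_range_succ' (fun k => (ω:ℂ)^k * μ^(n+1-k) * ((n+1).choose k))]
    simp only [pow_zero, Nat.choose_zero_right, Nat.cast_one, one_mul, mul_one, Nat.sub_zero]
    rw [add_comm (μ ^ (n+1))]
    congr 1
    apply Finset.sum_congr rfl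
    intro i _
    have hni : n + 1 - (i + 1) = n - i := by omega
    rw [hni]
    ring
  rw [hsum]
  constructor
  · intro h
    have := pow_eq_zero_iff (n := n+1) (by omega) |>.mp h
    linear_combination this
  · intro h
    rw [h]
    simp
end

section
/- Let m ≥ 1, A_m the m×m upper shift matrix, c_m the first standard basis vector, l_i(ω) = binom(m,i)·ω^i, and M(ω) = A_m − l(ω)·c_m^⊤. Then (M(ω) + ω·I_m)^m = 0, i.e. M(ω) + ωI is nilpotent of index at most m. -/
open Matrix

noncomputable def pFun (m : ℕ) (ω : ℝ) (i j : ℕ) : ℝ :=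
  if j ≤ i then ((m - 1 - j).choose (i - j)) * ω ^ (i - j) else 0

noncomputable def pascalMat (m : ℕ) (ω : ℝ) : Matrix (Fin m) (Fin m) ℝ :=
  Matrix.of fun i j => pFun m ω i j

lemma pFun_top (m : ℕ) (ω : ℝ) (j : ℕ) (hj : j < m) : pFun m ω m j = 0 := by
  unfold pFun
  rw [if_pos hj.le, Nat.choose_eq_zero_of_lt (by omega), Nat.cast_zero, zero_mul]

lemma pFun_key (m : ℕ) (hm : 1 ≤ m) (ω : ℝ) (i j : ℕ) (hj : j < m) :
    pFun m ω (i + 1) j + ω * pFun m ω i j =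
      if j = 0 then (m.choose (i + 1)) * ω ^ (i + 1) else pFun m ω i (j - 1) := by
  unfold pFun
  by_cases hj0 : j = 0
  · subst hj0
    obtain ⟨n, rfl⟩ : ∃ n, m = n + 1 := ⟨m - 1, by omega⟩
    simp only [if_pos (Nat.zero_le _), Nat.sub_zero, Nat.add_sub_cancel, if_pos rfl]
    rw [Nat.choose_succ_succ]
    push_cast
    ring
  · rw [if_neg hj0]
    rcases lt_trichotomy j (i + 1) with h | h | h
    · have hji : j ≤ i := by omega
      rw [if_pos (show j ≤ i + 1 by omega), if_pos hji, if_pos (show j - 1 ≤ i by omega)]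
      have h1 : i + 1 - j = (i - j) + 1 := by omega
      have h2 : i - (j - 1) = (i - j) + 1 := by omega
      have h3 : m - 1 - (j - 1) = (m - 1 - j) + 1 := by omega
      rw [h1, h2, h3, Nat.choose_succ_succ]
      push_cast
      ring
    · subst h
      rw [if_pos le_rfl, if_neg (show ¬ i + 1 ≤ i by omega),
        if_pos (show i + 1 - 1 ≤ i by omega)]
      simp
    · rw [if_neg (show ¬ j ≤ i + 1 by omega), if_neg (show ¬ j ≤ i by omega),
        if_neg (show ¬ j - 1 ≤ i by omega)]
      simp

lemma shift_mul_pascal (m : ℕ) (ω : ℝ) (i j : Fin m) :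
    (shiftMat m * pascalMat m ω) i j = pFun m ω ((i : ℕ) + 1) j := by
  rw [mul_apply]
  simp only [shiftMat, pascalMat, of_apply, ite_mul, one_mul, zero_mul]
  by_cases h : (i : ℕ) + 1 < m
  · have : ∀ k : Fin m, ((i : ℕ) + 1 = (k : ℕ)) ↔ ((⟨(i:ℕ)+1, h⟩ : Fin m) = k) := by
      intro k; rw [Fin.ext_iff]
    rw [Finset.sum_congr rfl (fun k _ => by rw [if_congr (this k) rfl rfl]),
      Finset.sum_ite_eq, if_pos (Finset.mem_univ _)]
  · have hi : (i : ℕ) + 1 = m := by omega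
    rw [Finset.sum_eq_zero, hi, pFun_top m ω j j.isLt]
    intro k _
    rw [if_neg (show ¬ (i : ℕ) + 1 = (k : ℕ) by omega)]

lemma pascal_mul_shift (m : ℕ) (ω : ℝ) (i j : Fin m) :
    (pascalMat m ω * shiftMat m) i j =
      if 1 ≤ (j : ℕ) then pFun m ω i ((j : ℕ) - 1) else 0 := by
  rw [mul_apply]
  simp only [shiftMat, pascalMat, of_apply, mul_ite, mul_one, mul_zero]
  by_cases h : 1 ≤ (j : ℕ)
  · rw [if_pos h]
    have hlt : (j : ℕ) - 1 < m := by omega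
    have : ∀ k : Fin m, ((k : ℕ) + 1 = (j : ℕ)) ↔ (k = (⟨(j:ℕ)-1, hlt⟩ : Fin m)) := by
      intro k; rw [Fin.ext_iff]; constructor <;> intro h' <;> simp at h' ⊢ <;> omega
    rw [Finset.sum_congr rfl (fun k _ => by rw [if_congr (this k) rfl rfl]),
      Finset.sum_ite_eq', if_pos (Finset.mem_univ _)]
  · rw [if_neg h, Finset.sum_eq_zero]
    intro k _
    rw [if_neg (show ¬ (k : ℕ) + 1 = (j : ℕ) by omega)]

lemma gain_mul_pascal (m : ℕ) (hm : 1 ≤ m) (ω : ℝ) :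
    Matrix.vecMulVec (obsGain m ω) (firstBasis m) * pascalMat m ω =
      Matrix.vecMulVec (obsGain m ω) (firstBasis m) := by
  ext i j
  rw [mul_apply]
  simp only [vecMulVec_apply, pascalMat, firstBasis, of_apply, mul_ite, mul_one, mul_zero,
    ite_mul, zero_mul]
  have : ∀ k : Fin m, ((k : ℕ) = 0) ↔ (k = (⟨0, hm⟩ : Fin m)) := by
    intro k; rw [Fin.ext_iff]
  rw [Finset.sum_congr rfl (fun k _ => by rw [if_congr (this k) rfl rfl]),
    Finset.sum_ite_eq', if_pos (Finset.mem_univ _)]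
  simp only [pFun]
  by_cases hj : (j : ℕ) = 0
  · rw [if_pos (show (j : ℕ) ≤ 0 by omega), if_pos hj]
    simp [hj]
  · rw [if_neg (show ¬ (j : ℕ) ≤ 0 by omega), if_neg hj, mul_zero]

lemma key_conj (m : ℕ) (hm : 1 ≤ m) (ω : ℝ) :
    (esoMat m ω + ω • (1 : Matrix (Fin m) (Fin m) ℝ)) * pascalMat m ω =
      pascalMat m ω * shiftMat m := by
  rw [esoMat, add_mul, sub_mul, smul_mul_assoc, one_mul, gain_mul_pascal m hm ω]
  ext i j
  simp only [Matrix.add_apply, Matrix.sub_apply, Matrix.smul_apply, smul_eq_mul]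
  rw [shift_mul_pascal, pascal_mul_shift]
  have hk := pFun_key m hm ω i j j.isLt
  simp only [pascalMat, of_apply, vecMulVec_apply, obsGain, firstBasis]
  by_cases hj : (j : ℕ) = 0
  · rw [if_pos hj, if_neg (show ¬ 1 ≤ (j : ℕ) by omega), mul_one]
    rw [if_pos hj] at hk
    linarith [hk]
  · rw [if_neg hj, if_pos (show 1 ≤ (j : ℕ) by omega), mul_zero, sub_zero]
    rw [if_neg hj] at hk
    linarith [hk]

lemma pascal_det (m : ℕ) (ω : ℝ) : (pascalMat m ω).det = 1 := by
  rw [Matrix.det_of_lowerTriangular]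
  · apply Finset.prod_eq_one
    intro i _
    simp [pascalMat, pFun]
  · intro i j h
    have hij : ¬ ((j : ℕ) ≤ (i : ℕ)) := by
      simp only [OrderDual.toDual_lt_toDual] at h
      exact not_le.mpr (Fin.lt_iff_val_lt_val.mp h)
    simp only [pascalMat, of_apply, pFun]
    rw [if_neg hij]

lemma shift_pow (m : ℕ) (k : ℕ) (i j : Fin m) :
    (shiftMat m ^ k) i j = if (i : ℕ) + k = (j : ℕ) then 1 else 0 := by
  induction k generalizing i j with
  | zero => simp [Matrix.one_apply, Fin.ext_iff, eq_comm]
  | succ n ih =>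
    rw [pow_succ, mul_apply]
    simp only [ih]
    simp only [shiftMat, of_apply]
    by_cases h : (i : ℕ) + n < m
    · rw [Finset.sum_eq_single_of_mem (⟨(i:ℕ)+n, h⟩ : Fin m) (Finset.mem_univ _)]
      · rw [if_pos rfl, one_mul]
        simp [Nat.add_assoc]
      · intro b _ hb
        rw [if_neg (fun hc => hb (Fin.ext hc.symm)), zero_mul]
    · rw [Finset.sum_eq_zero, if_neg (show ¬ (i : ℕ) + (n + 1) = (j : ℕ) by omega)]
      intro l _
      rw [if_neg (show ¬ (i : ℕ) + n = (l : ℕ) by omega), zero_mul]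

lemma shift_pow_m (m : ℕ) : shiftMat m ^ m = 0 := by
  ext i j
  rw [shift_pow, if_neg (show ¬ (i : ℕ) + m = (j : ℕ) by omega)]
  rfl

/-- `(M(ω) + ω·I_m)^m = 0`: the shifted ESO error matrix is nilpotent of index at most `m`. -/
theorem eso_nilpotent (m : ℕ) (hm : 1 ≤ m) (ω : ℝ) :
    (esoMat m ω + ω • (1 : Matrix (Fin m) (Fin m) ℝ)) ^ m = 0 := by
  set N := esoMat m ω + ω • (1 : Matrix (Fin m) (Fin m) ℝ) with hN
  set P := pascalMat m ω with hP
  have hc : N * P = P * shiftMat m := key_conj m hm ω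
  have hpow : ∀ k : ℕ, N ^ k * P = P * shiftMat m ^ k := by
    intro k
    induction k with
    | zero => simp
    | succ n ih =>
      rw [pow_succ, pow_succ, mul_assoc, hc, ← mul_assoc, ih, mul_assoc]
  have h0 : N ^ m * P = 0 := by rw [hpow m, shift_pow_m, mul_zero]
  have hdet : IsUnit P.det := by rw [hP, pascal_det]; exact isUnit_one
  calc N ^ m = N ^ m * (P * P⁻¹) := by rw [Matrix.mul_nonsing_inv P hdet, mul_one]
    _ = (N ^ m * P) * P⁻¹ := by rw [mul_assoc]
    _ = 0 := by rw [h0, zero_mul]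
end

section
/- Let m ≥ 1, A_m the m×m upper shift matrix, c_m the first standard basis vector, l_i(ω) = binom(m,i)·ω^i, and M(ω) = A_m − l(ω)·c_m^⊤. There exists a constant C > 0, depending only on m, such that for all ω ≥ 1 and all t ≥ 0, the operator norm of the matrix exponential satisfies ‖exp(t·M(ω))‖ ≤ C · ω^{m−1} · e^{−ωt/2}. -/
set_option maxHeartbeats 1000000
set_option synthInstance.maxHeartbeats 1000000


open Matrix

namespace EsoAux

/-- The Jordan-chain matrix `P_{ij} = C(m-1-j, i-j)` (lower unitriangular). -/
noncomputable def Pmat (m : ℕ) : Matrix (Fin m) (Fin m) ℝ :=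
  Matrix.of fun i j => if (j : ℕ) ≤ (i : ℕ) then ((m - 1 - (j : ℕ)).choose ((i : ℕ) - (j : ℕ)) : ℝ) else 0

lemma sum_ite_nat {m : ℕ} (f : Fin m → ℝ) (v : ℕ) :
    (∑ j : Fin m, if v = (j : ℕ) then f j else 0) = if h : v < m then f ⟨v, h⟩ else 0 := by
  by_cases h : v < m
  · rw [dif_pos h, Finset.sum_eq_single (⟨v, h⟩ : Fin m)]
    · simp
    · intro b _ hb
      have : v ≠ (b : ℕ) := fun hv => hb (by simp [Fin.ext_iff, ← hv])
      simp [this]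
    · simp
  · rw [dif_neg h]
    refine Finset.sum_eq_zero fun j _ => ?_
    have hj := j.isLt
    have : v ≠ (j : ℕ) := by omega
    simp [this]

lemma N_apply {m : ℕ} (i j : Fin m) : (esoMat m 1 + 1) i j =
    (if (i : ℕ) + 1 = (j : ℕ) then (1:ℝ) else 0) + (if (i:ℕ) = (j:ℕ) then 1 else 0)
      - (m.choose ((i : ℕ) + 1)) * (if (0:ℕ) = (j : ℕ) then 1 else 0) := by
  simp only [esoMat, shiftMat, vecMulVec, obsGain, firstBasis, Matrix.add_apply,
    Matrix.sub_apply, Matrix.of_apply, Matrix.one_apply, one_pow, mul_one, Fin.ext_iff]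
  by_cases h1 : (i:ℕ) + 1 = (j:ℕ) <;> by_cases h2 : (i:ℕ) = (j:ℕ) <;>
    by_cases h3 : (j:ℕ) = 0 <;>
    simp only [h1, h2, h3, if_true, if_false, eq_comm] <;> ring

lemma N_mul_P_apply {m : ℕ} (i k : Fin m) :
    ((esoMat m 1 + 1) * Pmat m) i k =
      (if h : (i : ℕ) + 1 < m then Pmat m ⟨(i:ℕ)+1, h⟩ k else 0) + Pmat m i k
        - (m.choose ((i : ℕ) + 1)) * Pmat m ⟨0, i.pos⟩ k := by
  rw [Matrix.mul_apply]
  simp only [N_apply, sub_mul, add_mul, ite_mul, one_mul, zero_mul, mul_assoc]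
  rw [Finset.sum_sub_distrib, Finset.sum_add_distrib, sum_ite_nat, sum_ite_nat,
    ← Finset.mul_sum, sum_ite_nat (fun j => Pmat m j k) 0]
  have h0 : (0:ℕ) < m := i.pos
  have hi : (i:ℕ) < m := i.isLt
  rw [dif_pos h0, dif_pos hi]

lemma P_mul_S_apply {m : ℕ} (i k : Fin m) :
    (Pmat m * shiftMat m) i k =
      if h : 1 ≤ (k : ℕ) then Pmat m i ⟨(k:ℕ)-1, lt_of_le_of_lt (Nat.sub_le _ _) k.isLt⟩ else 0 := by
  rw [Matrix.mul_apply]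
  by_cases h : 1 ≤ (k : ℕ)
  · rw [dif_pos h, Finset.sum_eq_single (⟨(k:ℕ)-1, lt_of_le_of_lt (Nat.sub_le _ _) k.isLt⟩ : Fin m)]
    · simp only [shiftMat, Matrix.of_apply]
      rw [if_pos (by omega)]
      ring
    · intro b _ hb
      have : ¬ ((b:ℕ) + 1 = (k:ℕ)) := fun hv => hb (by simp [Fin.ext_iff]; omega)
      simp [shiftMat, this]
    · simp
  · rw [dif_neg h]
    refine Finset.sum_eq_zero fun j _ => ?_
    have : ¬ ((j:ℕ) + 1 = (k:ℕ)) := by omega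
    simp [shiftMat, this]

lemma N_mul_P {m : ℕ} : (esoMat m 1 + 1) * Pmat m = Pmat m * shiftMat m := by
  ext i k
  rw [N_mul_P_apply, P_mul_S_apply]
  have hi : (i:ℕ) < m := i.isLt
  have hk : (k:ℕ) < m := k.isLt
  simp only [Pmat, Matrix.of_apply]
  by_cases hk0 : 1 ≤ (k:ℕ)
  · rw [dif_pos hk0]
    -- P 0 k = 0 since ¬ k ≤ 0
    rw [if_neg (by omega : ¬ (k:ℕ) ≤ (0:ℕ))]
    by_cases hi1 : (i:ℕ) + 1 < m
    · rw [dif_pos hi1]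
      by_cases hki : (k:ℕ) ≤ (i:ℕ)
      · rw [if_pos (by omega : (k:ℕ) ≤ (i:ℕ)+1), if_pos hki, if_pos (by omega : (k:ℕ)-1 ≤ (i:ℕ))]
        push_cast
        rw [mul_zero, sub_zero, ← Nat.cast_add, Nat.cast_inj]
        have h1 : m - 1 - ((k:ℕ) - 1) = (m - 1 - (k:ℕ)) + 1 := by omega
        have h2 : (i:ℕ) - ((k:ℕ) - 1) = ((i:ℕ) - (k:ℕ)) + 1 := by omega
        have h3 : (i:ℕ) + 1 - (k:ℕ) = ((i:ℕ) - (k:ℕ)) + 1 := by omega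
        rw [h1, h2, h3, Nat.choose_succ_succ]
        simp [Nat.succ_eq_add_one]
        omega
      · by_cases hke : (k:ℕ) = (i:ℕ) + 1
        · rw [if_pos (by omega), if_neg hki, if_pos (by omega : (k:ℕ)-1 ≤ (i:ℕ))]
          rw [mul_zero, sub_zero, add_zero]
          have h1 : (i:ℕ) + 1 - (k:ℕ) = 0 := by omega
          have h2 : (i:ℕ) - ((k:ℕ)-1) = 0 := by omega
          rw [h1, h2, Nat.choose_zero_right, Nat.choose_zero_right]
        · rw [if_neg (by omega), if_neg hki, if_neg (by omega)]
          ring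
    · -- i = m - 1
      have him : (i:ℕ) = m - 1 := by omega
      rw [dif_neg hi1, if_pos (by omega : (k:ℕ) ≤ (i:ℕ)), if_pos (by omega : (k:ℕ)-1 ≤ (i:ℕ))]
      have h1 : (i:ℕ) - (k:ℕ) = m - 1 - (k:ℕ) := by omega
      have h2 : (i:ℕ) - ((k:ℕ)-1) = m - 1 - ((k:ℕ)-1) := by omega
      rw [h1, h2, Nat.choose_self, Nat.choose_self]
      ring
  · -- k = 0
    have hk0' : (k:ℕ) = 0 := by omega
    rw [dif_neg hk0]
    rw [if_pos (by omega : (k:ℕ) ≤ (i:ℕ)), if_pos (by omega : (k:ℕ) ≤ (0:ℕ))]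
    by_cases hi1 : (i:ℕ) + 1 < m
    · rw [dif_pos hi1, if_pos (by omega : (k:ℕ) ≤ (i:ℕ)+1)]
      simp only [hk0', Nat.sub_zero, Nat.choose_zero_right, Nat.cast_one, mul_one]
      have h3' : ∀ q, m = q + 1 → m.choose ((i:ℕ)+1) = (m-1).choose (i:ℕ) + (m-1).choose ((i:ℕ)+1) := by
        intro q hq
        subst hq
        simp [Nat.choose_succ_succ]
      have h3 := h3' (m-1) (by omega)
      push_cast [h3]
      ring
    · rw [dif_neg hi1]
      have h4 : m.choose ((i:ℕ)+1) = 1 := by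
        have h5 : (i:ℕ) + 1 = m := by omega
        rw [h5, Nat.choose_self]
      simp only [hk0', Nat.sub_zero, h4]
      have h7 : (m - 1).choose (i:ℕ) = 1 := by
        rw [(by omega : (i:ℕ) = m - 1)]
        exact Nat.choose_self _
      rw [h7]
      norm_num

lemma shift_pow {m : ℕ} (p : ℕ) (i j : Fin m) :
    ((shiftMat m) ^ p) i j = if (i:ℕ) + p = (j:ℕ) then 1 else 0 := by
  induction p generalizing j with
  | zero => simp [Matrix.one_apply, Fin.ext_iff, eq_comm]
  | succ n ih =>
    rw [pow_succ, Matrix.mul_apply]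
    have : ∀ l : Fin m, ((shiftMat m) ^ n) i l * shiftMat m l j
        = if (i:ℕ) + n = (l:ℕ) then (if (l:ℕ) + 1 = (j:ℕ) then 1 else 0) else 0 := by
      intro l
      rw [ih l]
      simp only [shiftMat, Matrix.of_apply]
      by_cases h : (i:ℕ) + n = (l:ℕ) <;> simp [h]
    simp_rw [this]
    rw [sum_ite_nat (fun l => if (l:ℕ) + 1 = (j:ℕ) then (1:ℝ) else 0) ((i:ℕ)+n)]
    by_cases h : (i:ℕ) + n < m
    · rw [dif_pos h]
      simp only [Fin.val_mk]
      by_cases h2 : (i:ℕ) + n + 1 = (j:ℕ)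
      · rw [if_pos h2, if_pos (by omega)]
      · rw [if_neg h2, if_neg (by omega)]
    · rw [dif_neg h]
      have hj := j.isLt
      rw [if_neg (by omega)]

lemma shift_pow_self {m : ℕ} : (shiftMat m) ^ m = 0 := by
  ext i j
  rw [shift_pow]
  have hj := j.isLt
  rw [if_neg (by omega)]
  simp

lemma P_lowerTri {m : ℕ} : (Pmat m).BlockTriangular OrderDual.toDual := by
  intro i j hij
  have h2 : (i:ℕ) < (j:ℕ) := hij
  simp only [Pmat, Matrix.of_apply]
  exact if_neg (by omega)

lemma P_det {m : ℕ} : (Pmat m).det = 1 := by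
  rw [Matrix.det_of_lowerTriangular (Pmat m) P_lowerTri]
  refine Finset.prod_eq_one fun i _ => ?_
  simp only [Pmat, Matrix.of_apply]
  rw [if_pos le_rfl, Nat.sub_self, Nat.choose_zero_right, Nat.cast_one]

lemma N_pow_mul_P {m : ℕ} (p : ℕ) :
    (esoMat m 1 + 1) ^ p * Pmat m = Pmat m * (shiftMat m) ^ p := by
  induction p with
  | zero => simp
  | succ n ih =>
    rw [pow_succ, pow_succ, mul_assoc, N_mul_P, ← mul_assoc, ih, mul_assoc]

lemma N_nilpotent {m : ℕ} : (esoMat m 1 + 1) ^ m = 0 := by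
  have h := N_pow_mul_P (m := m) m
  rw [shift_pow_self, mul_zero] at h
  have : Invertible (Pmat m) := (Pmat m).invertibleOfIsUnitDet (by rw [P_det]; exact isUnit_one)
  calc (esoMat m 1 + 1) ^ m = (esoMat m 1 + 1) ^ m * (Pmat m * ⅟(Pmat m)) := by
        rw [mul_invOf_self, mul_one]
    _ = 0 := by rw [← mul_assoc, h, zero_mul]

end EsoAux

namespace EsoAux2

noncomputable def Dmat (m : ℕ) (ω : ℝ) : Matrix (Fin m) (Fin m) ℝ :=
  Matrix.diagonal fun i => ω ^ (i : ℕ)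

lemma D_mul_Dinv {m : ℕ} {ω : ℝ} (hω : ω ≠ 0) : Dmat m ω * Dmat m ω⁻¹ = 1 := by
  rw [Dmat, Dmat, Matrix.diagonal_mul_diagonal]
  rw [show (fun i : Fin m => ω ^ (i:ℕ) * (ω⁻¹) ^ (i:ℕ)) = fun _ => (1:ℝ) from
    funext fun i => by rw [← mul_pow, mul_inv_cancel₀ hω, one_pow]]
  exact Matrix.diagonal_one

lemma Dinv_mul_D {m : ℕ} {ω : ℝ} (hω : ω ≠ 0) : Dmat m ω⁻¹ * Dmat m ω = 1 := by
  rw [Dmat, Dmat, Matrix.diagonal_mul_diagonal]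
  rw [show (fun i : Fin m => (ω⁻¹) ^ (i:ℕ) * ω ^ (i:ℕ)) = fun _ => (1:ℝ) from
    funext fun i => by rw [← mul_pow, inv_mul_cancel₀ hω, one_pow]]
  exact Matrix.diagonal_one

lemma sim {m : ℕ} (ω : ℝ) : esoMat m ω * Dmat m ω = Dmat m ω * (ω • esoMat m 1) := by
  ext i j
  rw [Dmat, Matrix.mul_diagonal, Matrix.diagonal_mul, Matrix.smul_apply]
  simp only [esoMat, shiftMat, vecMulVec, obsGain, firstBasis, Matrix.sub_apply, Matrix.of_apply,
    smul_eq_mul, one_pow, mul_one]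
  split_ifs with h1 h2 h3
  · exfalso; omega
  · rw [← h1, pow_succ]
    ring
  · rw [h3, pow_zero, pow_succ]
    ring
  · ring

lemma esoMat_eq {m : ℕ} {ω : ℝ} (hω : ω ≠ 0) :
    esoMat m ω = Dmat m ω * (ω • esoMat m 1) * Dmat m ω⁻¹ := by
  calc esoMat m ω = esoMat m ω * (Dmat m ω * Dmat m ω⁻¹) := by rw [D_mul_Dinv hω, mul_one]
    _ = (esoMat m ω * Dmat m ω) * Dmat m ω⁻¹ := by rw [mul_assoc]
    _ = _ := by rw [sim]

lemma smul_esoMat_eq {m : ℕ} {ω : ℝ} (hω : ω ≠ 0) (t : ℝ) :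
    t • esoMat m ω = Dmat m ω * ((t * ω) • esoMat m 1) * Dmat m ω⁻¹ := by
  rw [esoMat_eq hω, ← smul_mul_assoc, ← mul_smul_comm, smul_smul]

lemma norm_diag_le {m : ℕ} (d : Fin m → ℝ) (b : ℝ) (hb : 0 ≤ b) (h : ∀ i, |d i| ≤ b) :
    ‖Matrix.toEuclideanCLM (𝕜 := ℝ) (Matrix.diagonal d)‖ ≤ b := by
  refine ContinuousLinearMap.opNorm_le_bound _ hb fun x => ?_
  have hx : Matrix.toEuclideanCLM (𝕜 := ℝ) (Matrix.diagonal d) x = (WithLp.equiv 2 (Fin m → ℝ)).symm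
      ((Matrix.diagonal d).mulVec ((WithLp.equiv 2 (Fin m → ℝ)) x)) := rfl
  rw [hx, EuclideanSpace.norm_eq]
  have key : ∀ i : Fin m,
      ‖((WithLp.equiv 2 (Fin m → ℝ)).symm
          ((Matrix.diagonal d).mulVec ((WithLp.equiv 2 (Fin m → ℝ)) x)) i)‖ ^ 2
        ≤ (b * ‖x i‖) ^ 2 := by
    intro i
    have happ : ((WithLp.equiv 2 (Fin m → ℝ)).symm
        ((Matrix.diagonal d).mulVec ((WithLp.equiv 2 (Fin m → ℝ)) x)) i) = d i * x i := by
      simp [Matrix.mulVec_diagonal]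
    rw [happ]
    have : ‖d i * x i‖ ≤ b * ‖x i‖ := by
      rw [norm_mul, Real.norm_eq_abs (d i)]
      exact mul_le_mul_of_nonneg_right (h i) (norm_nonneg _)
    exact pow_le_pow_left₀ (norm_nonneg _) this 2
  calc Real.sqrt (∑ i, ‖((WithLp.equiv 2 (Fin m → ℝ)).symm
          ((Matrix.diagonal d).mulVec ((WithLp.equiv 2 (Fin m → ℝ)) x)) i)‖ ^ 2)
      ≤ Real.sqrt (∑ i, (b * ‖x i‖) ^ 2) :=
        Real.sqrt_le_sqrt (Finset.sum_le_sum fun i _ => key i)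
    _ = Real.sqrt (b ^ 2 * ∑ i, ‖x i‖ ^ 2) := by
        rw [Finset.mul_sum]
        congr 1
        refine Finset.sum_congr rfl fun i _ => by ring
    _ = b * Real.sqrt (∑ i, ‖x i‖ ^ 2) := by
        rw [Real.sqrt_mul (sq_nonneg b), Real.sqrt_sq hb]
    _ = b * ‖x‖ := by rw [EuclideanSpace.norm_eq]

lemma exp_M1_bound (m : ℕ) (hm : 1 ≤ m)
    (hnil : (esoMat m 1 + 1) ^ m = 0) :
    ∃ C : ℝ, 0 < C ∧ ∀ s : ℝ, 0 ≤ s →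
      ‖NormedSpace.exp (s • (Matrix.toEuclideanCLM (𝕜 := ℝ) (esoMat m 1)))‖
        ≤ C * Real.exp (-s / 2) := by
  letI : NormedAlgebra ℚ (EuclideanSpace ℝ (Fin m) →L[ℝ] EuclideanSpace ℝ (Fin m)) :=
    NormedAlgebra.restrictScalars ℚ ℝ _
  haveI : SMulCommClass ℝ (EuclideanSpace ℝ (Fin m) →L[ℝ] EuclideanSpace ℝ (Fin m))
      (EuclideanSpace ℝ (Fin m) →L[ℝ] EuclideanSpace ℝ (Fin m)) := by
    constructor
    intro r a b
    show r • (a * b) = a * (r • b)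
    ext x
    simp
  haveI : IsScalarTower ℝ (EuclideanSpace ℝ (Fin m) →L[ℝ] EuclideanSpace ℝ (Fin m))
      (EuclideanSpace ℝ (Fin m) →L[ℝ] EuclideanSpace ℝ (Fin m)) := by
    constructor
    intro r a b
    show (r • a) * b = r • (a * b)
    ext x
    simp
  haveI : Nontrivial (EuclideanSpace ℝ (Fin m)) :=
    ⟨EuclideanSpace.single ⟨0, hm⟩ 1, 0, fun h => by
      have := congrArg (fun y : EuclideanSpace ℝ (Fin m) => ‖y‖) h
      simp [EuclideanSpace.norm_single] at this⟩
  set L := Matrix.toEuclideanCLM (𝕜 := ℝ) (esoMat m 1) with hL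
  set K := L + 1 with hK
  have hKm : K ^ m = 0 := by
    have hK2 : K = Matrix.toEuclideanCLM (𝕜 := ℝ) (esoMat m 1 + 1) := by
      rw [map_add, _root_.map_one, hK, hL]
    rw [hK2, ← map_pow, hnil, map_zero]
  refine ⟨∑ n ∈ Finset.range m, (2 * ‖K‖) ^ n, ?_, ?_⟩
  · have h1 : (1:ℝ) = (2 * ‖K‖) ^ 0 := by norm_num
    have := Finset.single_le_sum (f := fun n => (2 * ‖K‖) ^ n)
      (fun n _ => pow_nonneg (by positivity) n) (Finset.mem_range.mpr hm)
    simp only [pow_zero] at this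
    linarith
  · intro s hs
    have hsL : s • L = s • K + (-s) • (1 : EuclideanSpace ℝ (Fin m) →L[ℝ] EuclideanSpace ℝ (Fin m)) := by
      rw [hK]
      module
    have hcomm : Commute (s • K)
        ((-s) • (1 : EuclideanSpace ℝ (Fin m) →L[ℝ] EuclideanSpace ℝ (Fin m))) :=
      (Commute.one_right (s • K)).smul_right (-s)
    rw [hsL, NormedSpace.exp_add_of_commute hcomm]
    have hexp1 : NormedSpace.exp
        ((-s) • (1 : EuclideanSpace ℝ (Fin m) →L[ℝ] EuclideanSpace ℝ (Fin m)))
        = Real.exp (-s) • 1 := by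
      rw [← Algebra.algebraMap_eq_smul_one]
      rw [← NormedSpace.map_exp (algebraMap ℝ _) (continuous_algebraMap ℝ _)]
      rw [← Real.exp_eq_exp_ℝ, Algebra.algebraMap_eq_smul_one]
    rw [hexp1, mul_smul_comm, mul_one]
    refine le_trans (le_of_eq (norm_smul (Real.exp (-s)) (NormedSpace.exp (s • K)))) ?_
    rw [Real.norm_eq_abs, Real.abs_exp]
    have hfin : NormedSpace.exp (s • K) = ∑ n ∈ Finset.range m, (n.factorial⁻¹ : ℝ) • (s • K) ^ n := by
      rw [NormedSpace.exp_eq_tsum ℝ]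
      refine tsum_eq_sum fun n hn => ?_
      have hmn : m ≤ n := Nat.le_of_not_lt fun h => hn (Finset.mem_range.mpr h)
      rw [smul_pow, pow_eq_zero_of_le hmn hKm]
      simp only [smul_eq_zero]
      refine Or.inr ?_
      ext x
      simp
    have hterm : ∀ n, ‖(n.factorial⁻¹ : ℝ) • (s • K) ^ n‖ ≤ (2 * ‖K‖) ^ n * Real.exp (s / 2) := by
      intro n
      rw [smul_pow]
      have h1 := norm_smul ((n.factorial : ℝ)⁻¹) (s ^ n • K ^ n)
      have h2 := norm_smul (s ^ n) (K ^ n)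
      rw [h1, h2, Real.norm_eq_abs, Real.norm_eq_abs,
        abs_of_nonneg (by positivity : (0:ℝ) ≤ ((n.factorial : ℝ))⁻¹),
        abs_of_nonneg (pow_nonneg hs n)]
      have hKn : ‖K ^ n‖ ≤ ‖K‖ ^ n := norm_pow_le K n
      have hfact : s ^ n / n.factorial ≤ 2 ^ n * Real.exp (s / 2) := by
        have := Real.pow_div_factorial_le_exp (x := s / 2) (by positivity) n
        have h2 : (s / 2) ^ n / n.factorial ≤ Real.exp (s / 2) := this
        have h3 : s ^ n = 2 ^ n * (s / 2) ^ n := by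
          rw [← mul_pow]
          ring_nf
        rw [h3]
        calc 2 ^ n * (s / 2) ^ n / n.factorial = 2 ^ n * ((s / 2) ^ n / n.factorial) := by ring
          _ ≤ 2 ^ n * Real.exp (s / 2) := by
              exact mul_le_mul_of_nonneg_left h2 (by positivity)
      calc (n.factorial⁻¹ : ℝ) * (s ^ n * ‖K ^ n‖)
          ≤ (n.factorial⁻¹ : ℝ) * (s ^ n * ‖K‖ ^ n) := by
            refine mul_le_mul_of_nonneg_left ?_ (by positivity)
            exact mul_le_mul_of_nonneg_left hKn (pow_nonneg hs n)
        _ = (s ^ n / n.factorial) * ‖K‖ ^ n := by ring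
        _ ≤ (2 ^ n * Real.exp (s / 2)) * ‖K‖ ^ n := by
            exact mul_le_mul_of_nonneg_right hfact (pow_nonneg (norm_nonneg _) n)
        _ = (2 * ‖K‖) ^ n * Real.exp (s / 2) := by rw [mul_pow]; ring
    calc Real.exp (-s) * ‖NormedSpace.exp (s • K)‖
        ≤ Real.exp (-s) * ((∑ n ∈ Finset.range m, (2 * ‖K‖) ^ n) * Real.exp (s / 2)) := by
          refine mul_le_mul_of_nonneg_left ?_ (Real.exp_pos _).le
          rw [hfin, Finset.sum_mul]
          exact (norm_sum_le _ _).trans (Finset.sum_le_sum fun n _ => hterm n)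
      _ = (∑ n ∈ Finset.range m, (2 * ‖K‖) ^ n) * (Real.exp (-s) * Real.exp (s / 2)) := by ring
      _ = (∑ n ∈ Finset.range m, (2 * ‖K‖) ^ n) * Real.exp (-s / 2) := by
          rw [← Real.exp_add]
          congr 1
          ring
end EsoAux2

/-- There is a constant `C > 0` depending only on `m` such that for all `ω ≥ 1` and `t ≥ 0`
the (Euclidean) operator norm of the ESO error semigroup satisfies
`‖exp(t·M(ω))‖ ≤ C·ω^{m−1}·e^{−ωt/2}`. -/
theorem eso_exp_norm_bound (m : ℕ) (hm : 1 ≤ m) :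
    ∃ C : ℝ, 0 < C ∧ ∀ ω : ℝ, 1 ≤ ω → ∀ t : ℝ, 0 ≤ t →
      ‖Matrix.toEuclideanCLM (𝕜 := ℝ) (NormedSpace.exp (t • esoMat m ω))‖ ≤
        C * ω ^ (m - 1) * Real.exp (-(ω * t) / 2) := by
  obtain ⟨C, hC, hbound⟩ := EsoAux2.exp_M1_bound m hm EsoAux.N_nilpotent
  refine ⟨C, hC, ?_⟩
  intro ω hω t ht
  have hω0 : (0:ℝ) < ω := lt_of_lt_of_le one_pos hω
  letI : SeminormedRing (Matrix (Fin m) (Fin m) ℝ) := Matrix.linftyOpSemiNormedRing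
  letI : NormedRing (Matrix (Fin m) (Fin m) ℝ) := Matrix.linftyOpNormedRing
  letI : NormedAlgebra ℝ (Matrix (Fin m) (Fin m) ℝ) := Matrix.linftyOpNormedAlgebra
  letI : NormedAlgebra ℚ (Matrix (Fin m) (Fin m) ℝ) := NormedAlgebra.restrictScalars ℚ ℝ _
  letI : NormedAlgebra ℚ (EuclideanSpace ℝ (Fin m) →L[ℝ] EuclideanSpace ℝ (Fin m)) :=
    NormedAlgebra.restrictScalars ℚ ℝ _
  have hφc : Continuous (Matrix.toEuclideanCLM (𝕜 := ℝ) (n := Fin m)) := by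
    let ψ : Matrix (Fin m) (Fin m) ℝ →ₗ[ℝ]
        (EuclideanSpace ℝ (Fin m) →L[ℝ] EuclideanSpace ℝ (Fin m)) :=
      { toFun := Matrix.toEuclideanCLM (𝕜 := ℝ) (n := Fin m)
        map_add' := fun a b => map_add _ a b
        map_smul' := fun r a => map_smul _ r a }
    exact ψ.continuous_of_finiteDimensional
  erw [NormedSpace.map_exp (Matrix.toEuclideanCLM (𝕜 := ℝ) (n := Fin m)) hφc]
  rw [EsoAux2.smul_esoMat_eq hω0.ne' t, _root_.map_mul, _root_.map_mul]
  rw [show Matrix.toEuclideanCLM (𝕜 := ℝ) ((t * ω) • esoMat m 1)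
      = (t * ω) • Matrix.toEuclideanCLM (𝕜 := ℝ) (esoMat m 1) from map_smul _ _ _]
  set u := Matrix.toEuclideanCLM (𝕜 := ℝ) (EsoAux2.Dmat m ω) with hu
  set v := Matrix.toEuclideanCLM (𝕜 := ℝ) (EsoAux2.Dmat m ω⁻¹) with hv
  have huv : u * v = 1 := by
    rw [hu, hv, ← _root_.map_mul, EsoAux2.D_mul_Dinv hω0.ne', _root_.map_one]
  have hvu : v * u = 1 := by
    rw [hu, hv, ← _root_.map_mul, EsoAux2.Dinv_mul_D hω0.ne', _root_.map_one]
  set E := NormedSpace.exp ((t * ω) • Matrix.toEuclideanCLM (𝕜 := ℝ) (esoMat m 1)) with hE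
  have hconj := NormedSpace.exp_units_conj
    (⟨u, v, huv, hvu⟩ : (EuclideanSpace ℝ (Fin m) →L[ℝ] EuclideanSpace ℝ (Fin m))ˣ)
    ((t * ω) • Matrix.toEuclideanCLM (𝕜 := ℝ) (esoMat m 1))
  rw [show u * ((t * ω) • Matrix.toEuclideanCLM (𝕜 := ℝ) (esoMat m 1)) * v
      = (⟨u, v, huv, hvu⟩ : (EuclideanSpace ℝ (Fin m) →L[ℝ] EuclideanSpace ℝ (Fin m))ˣ)
        * ((t * ω) • Matrix.toEuclideanCLM (𝕜 := ℝ) (esoMat m 1))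
        * ↑(⟨u, v, huv, hvu⟩ : (EuclideanSpace ℝ (Fin m) →L[ℝ] EuclideanSpace ℝ (Fin m))ˣ)⁻¹
      from rfl]
  rw [hconj]
  have hn1 : ‖u * E * v‖ ≤ ‖u‖ * ‖E‖ * ‖v‖ :=
    (norm_mul_le _ _).trans
      (mul_le_mul_of_nonneg_right (norm_mul_le u E) (norm_nonneg v))
  have hu_le : ‖u‖ ≤ ω ^ (m - 1) := by
    rw [hu, EsoAux2.Dmat]
    refine EsoAux2.norm_diag_le _ _ (by positivity) fun i => ?_
    rw [abs_of_nonneg (pow_nonneg hω0.le _)]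
    have hi : (i : ℕ) ≤ m - 1 := by have := i.isLt; omega
    exact pow_le_pow_right₀ hω hi
  have hv_le : ‖v‖ ≤ 1 := by
    rw [hv, EsoAux2.Dmat]
    refine EsoAux2.norm_diag_le _ _ zero_le_one fun i => ?_
    have hinv0 : (0:ℝ) ≤ ω⁻¹ := inv_nonneg.mpr hω0.le
    have hinv : ω⁻¹ ≤ 1 := by
      rw [inv_eq_one_div]
      exact (div_le_one hω0).mpr hω
    rw [abs_of_nonneg (pow_nonneg hinv0 _)]
    exact pow_le_one₀ hinv0 hinv
  have hE_le : ‖E‖ ≤ C * Real.exp (-(t * ω) / 2) := hbound (t * ω) (by positivity)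
  calc ‖u * E * v‖ ≤ ‖u‖ * ‖E‖ * ‖v‖ := hn1
    _ ≤ ω ^ (m - 1) * (C * Real.exp (-(t * ω) / 2)) * 1 :=
        mul_le_mul
          (mul_le_mul hu_le hE_le (norm_nonneg _) (by positivity))
          hv_le (norm_nonneg _) (by positivity)
    _ = C * ω ^ (m - 1) * Real.exp (-(ω * t) / 2) := by
        rw [show -(t * ω) / 2 = -(ω * t) / 2 by ring]
        ring
end
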